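/- Let Q and H be symmetric positive definite d×d matrices with H ⪯ Q, and let u ∈ ℝᵈ satisfy (Q−H)u ≠ 0. Then the SR1 update SR1(Q,H,u) = Q − ((Q−H)uuᵀ(Q−H))/(uᵀ(Q−H)u) satisfies H ⪯ SR1(Q,H,u) ⪯ Q. -/

import Mathlib

open Matrix

/-- The SR1 (symmetric rank-one) update. -/
noncomputable def SR1 {d : ℕ} (Q H : Matrix (Fin d) (Fin d) ℝ) (u : Fin d → ℝ) :
    Matrix (Fin d) (Fin d) ℝ :=
  Q - (u ⬝ᵥ (Q - H).mulVec u)⁻¹ • vecMulVec ((Q - H).mulVec u) ((Q - H).mulVec u)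

private lemma quad_vecMulVec {d : ℕ} (v x : Fin d → ℝ) :
    x ⬝ᵥ (vecMulVec v v) *ᵥ x = (v ⬝ᵥ x) * (v ⬝ᵥ x) := by
  simp only [vecMulVec, mulVec, dotProduct, of_apply, Finset.mul_sum, Finset.sum_mul]
  rw [Finset.sum_comm]
  congr 1; ext i; congr 1; ext j; ring

private lemma herm_vecMulVec {d : ℕ} (v : Fin d → ℝ) :
    (vecMulVec v v).IsHermitian := by
  ext i j
  simp [vecMulVec_apply, conjTranspose_apply, mul_comm]

/-- if H ⪯ Q (both symmetric positive definite) and (Q−H)u ≠ 0,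
then H ⪯ SR1(Q,H,u) ⪯ Q. -/
theorem sr1_between {d : ℕ} (Q H : Matrix (Fin d) (Fin d) ℝ) (u : Fin d → ℝ)
    (hQ : Q.PosDef) (hH : H.PosDef) (hQH : (Q - H).PosSemidef)
    (hu : (Q - H).mulVec u ≠ 0) :
    (SR1 Q H u - H).PosSemidef ∧ (Q - SR1 Q H u).PosSemidef := by
  set A := Q - H with hAdef
  set v := A *ᵥ u with hvdef
  set c := u ⬝ᵥ v with hcdef
  obtain ⟨B, hB⟩ : ∃ B : Matrix (Fin d) (Fin d) ℝ, A = Bᴴ * B := by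
    open scoped MatrixOrder in exact CStarAlgebra.nonneg_iff_eq_star_mul_self.mp hQH.nonneg
  have key : ∀ x y : Fin d → ℝ, x ⬝ᵥ A *ᵥ y = (B *ᵥ x) ⬝ᵥ (B *ᵥ y) := by
    intro x y
    rw [hB, ← mulVec_mulVec, dotProduct_mulVec, vecMul_conjTranspose]
    simp
  have hc0 : 0 < c := by
    have h0 : 0 ≤ c := by simpa using hQH.dotProduct_mulVec_nonneg u
    refine h0.lt_of_ne' fun h => hu ?_
    exact (hQH.dotProduct_mulVec_zero_iff u).mp (by simpa using h)
  -- v ⬝ᵥ x in terms of B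
  have hvx : ∀ x : Fin d → ℝ, v ⬝ᵥ x = (B *ᵥ u) ⬝ᵥ (B *ᵥ x) := by
    intro x
    rw [hvdef, dotProduct_comm, key, dotProduct_comm]
  have hcB : c = (B *ᵥ u) ⬝ᵥ (B *ᵥ u) := by rw [hcdef, key]
  -- Cauchy–Schwarz
  have hCS : ∀ x : Fin d → ℝ, (v ⬝ᵥ x) * (v ⬝ᵥ x) ≤ c * (x ⬝ᵥ A *ᵥ x) := by
    intro x
    rw [hvx, hcB, key]
    have := Finset.sum_mul_sq_le_sq_mul_sq Finset.univ (B *ᵥ u) (B *ᵥ x)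
    simpa [dotProduct, sq] using this
  have hherm : ((c⁻¹ • vecMulVec v v) : Matrix (Fin d) (Fin d) ℝ).IsHermitian := by
    ext i j
    simp [vecMulVec_apply, conjTranspose_apply, mul_comm (v i)]
  have hquad : ∀ x : Fin d → ℝ,
      x ⬝ᵥ (c⁻¹ • vecMulVec v v) *ᵥ x = c⁻¹ * ((v ⬝ᵥ x) * (v ⬝ᵥ x)) := by
    intro x
    rw [smul_mulVec, dotProduct_smul, smul_eq_mul, quad_vecMulVec]
  have hSR1 : SR1 Q H u = Q - c⁻¹ • vecMulVec v v := rfl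
  constructor
  · have heq : SR1 Q H u - H = A - c⁻¹ • vecMulVec v v := by
      rw [hSR1, hAdef]; abel
    rw [heq]
    refine .of_dotProduct_mulVec_nonneg (hQH.1.sub hherm) fun x => ?_
    rw [star_trivial, sub_mulVec, dotProduct_sub, hquad]
    have h1 := hCS x
    have h2 : c⁻¹ * ((v ⬝ᵥ x) * (v ⬝ᵥ x)) ≤ x ⬝ᵥ A *ᵥ x := by
      rw [inv_mul_le_iff₀ hc0]
      exact h1
    linarith
  · have heq : Q - SR1 Q H u = c⁻¹ • vecMulVec v v := by
      rw [hSR1]; abel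
    rw [heq]
    refine .of_dotProduct_mulVec_nonneg hherm fun x => ?_
    rw [star_trivial, hquad]
    exact mul_nonneg (by positivity) (mul_self_nonneg _)
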